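/- Let T be a densely defined closed operator from H1 to H2 that is one-to-one. Then T is minimum attaining if and only if the range R(T) is closed in H2 and the (then bounded) inverse operator T⁻¹ : R(T) → H1 attains its norm, i.e. there exists y₀ ∈ R(T) with ‖y₀‖ = 1 and ‖T⁻¹y₀‖ = ‖T⁻¹‖. -/

import Mathlib

variable {H₁ H₂ : Type*} [NormedAddCommGroup H₁] [InnerProductSpace ℂ H₁] [CompleteSpace H₁]
  [NormedAddCommGroup H₂] [InnerProductSpace ℂ H₂] [CompleteSpace H₂]

/-- The minimum modulus `m(T) = inf {‖Tx‖ : x ∈ D(T), ‖x‖ = 1}`. -/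
noncomputable def minMod (T : H₁ →ₗ.[ℂ] H₂) : ℝ :=
  sInf {r : ℝ | ∃ x : T.domain, ‖(x : H₁)‖ = 1 ∧ r = ‖T x‖}

/-- `T` is minimum attaining: some unit vector of the domain attains `m(T)`. -/
def MinAttains (T : H₁ →ₗ.[ℂ] H₂) : Prop :=
  ∃ x : T.domain, ‖(x : H₁)‖ = 1 ∧ ‖T x‖ = minMod T

lemma aux_ne_zero (T : H₁ →ₗ.[ℂ] H₂)
    (hinj : Function.Injective fun x : T.domain => T x)
    {x : T.domain} (hx : (x : H₁) ≠ 0) : T x ≠ 0 := by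
  intro h
  apply hx
  have : x = 0 := hinj (a₁ := x) (a₂ := 0) (by simpa [T.map_zero] using h)
  simp [this]

/-- For a densely defined closed one-to-one operator `T`, `T` is minimum attaining iff
`R(T)` is closed and the inverse `T⁻¹ : R(T) → H₁` attains its norm: there is a unit vector
`y₀ = T x₀ ∈ R(T)` with `‖T⁻¹ y₀‖ = ‖x₀‖ = ‖T⁻¹‖ = sup {‖x‖ : x ∈ D(T), ‖T x‖ = 1}`. -/
theorem minAttains_iff_closedRange_and_inverse_normAttains (T : H₁ →ₗ.[ℂ] H₂)
    (hdense : Dense (T.domain : Set H₁)) (hclosed : T.IsClosed)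
    (hinj : Function.Injective fun x : T.domain => T x) :
    MinAttains T ↔
      (IsClosed (Set.range fun x : T.domain => T x) ∧
        ∃ x₀ : T.domain, ‖T x₀‖ = 1 ∧
          ‖(x₀ : H₁)‖ = sSup {r : ℝ | ∃ x : T.domain, ‖T x‖ = 1 ∧ r = ‖(x : H₁)‖}) := by
  set S : Set ℝ := {r : ℝ | ∃ x : T.domain, ‖T x‖ = 1 ∧ r = ‖(x : H₁)‖} with hS
  have hbddBelow : BddBelow {r : ℝ | ∃ x : T.domain, ‖(x : H₁)‖ = 1 ∧ r = ‖T x‖} :=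
    ⟨0, by rintro r ⟨x, -, rfl⟩; positivity⟩
  constructor
  · rintro ⟨xs, hxs1, hxsm⟩
    set m := minMod T with hm
    have hxs0 : (xs : H₁) ≠ 0 := by
      intro h; rw [h] at hxs1; simp at hxs1
    have hm_pos : 0 < m := by
      rw [← hxsm]
      exact norm_pos_iff.mpr (aux_ne_zero T hinj hxs0)
    -- lower bound m‖x‖ ≤ ‖Tx‖
    have hlb : ∀ x : T.domain, m * ‖(x : H₁)‖ ≤ ‖T x‖ := by
      intro x
      rcases eq_or_ne (x : H₁) 0 with h0 | h0
      · have hx0 : x = 0 := Subtype.ext h0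
        simp [h0, hx0, T.map_zero]
      · have hn : (0 : ℝ) < ‖(x : H₁)‖ := norm_pos_iff.mpr h0
        set u : T.domain := ((‖(x : H₁)‖ : ℂ))⁻¹ • x with hu
        have hu1 : ‖(u : H₁)‖ = 1 := by
          rw [hu]
          simp [norm_smul, inv_mul_cancel₀ hn.ne']
        have hmem : ‖T u‖ ∈ {r : ℝ | ∃ x : T.domain, ‖(x : H₁)‖ = 1 ∧ r = ‖T x‖} :=
          ⟨u, hu1, rfl⟩
        have hle : m ≤ ‖T u‖ := csInf_le hbddBelow hmem
        have hTu : ‖T u‖ = ‖(x : H₁)‖⁻¹ * ‖T x‖ := by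
          rw [hu, T.map_smul]
          simp [norm_smul]
        rw [hTu] at hle
        calc m * ‖(x : H₁)‖ ≤ (‖(x : H₁)‖⁻¹ * ‖T x‖) * ‖(x : H₁)‖ := by
              exact mul_le_mul_of_nonneg_right hle hn.le
          _ = ‖T x‖ := by field_simp
    refine ⟨?_, ?_⟩
    · -- closed range
      apply IsSeqClosed.isClosed
      intro ys y hmemr hy
      choose xs' hxs' using hmemr
      have hCauchy : CauchySeq fun n => ((xs' n : H₁)) := by
        rw [Metric.cauchySeq_iff]
        intro ε hε
        have hysC : CauchySeq ys := hy.cauchySeq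
        rw [Metric.cauchySeq_iff] at hysC
        obtain ⟨N, hN⟩ := hysC (m * ε) (by positivity)
        refine ⟨N, fun p hp q hq => ?_⟩
        have h1 : m * ‖((xs' p : H₁)) - (xs' q : H₁)‖ ≤ ‖T (xs' p - xs' q)‖ := by
          have := hlb (xs' p - xs' q)
          simpa using this
        have h2 : T (xs' p - xs' q) = ys p - ys q := by
          rw [T.map_sub]
          exact congrArg₂ Sub.sub (hxs' p) (hxs' q)
        rw [h2] at h1
        have h3 : ‖ys p - ys q‖ < m * ε := by
          have := hN p hp q hq
          simpa [dist_eq_norm] using this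
        have : m * ‖((xs' p : H₁)) - (xs' q : H₁)‖ < m * ε := lt_of_le_of_lt h1 h3
        have h4 := lt_of_mul_lt_mul_left this hm_pos.le
        simpa [dist_eq_norm] using h4
      obtain ⟨x, hx⟩ := cauchySeq_tendsto_of_complete hCauchy
      have hgraph : (x, y) ∈ T.graph := by
        have htend : Filter.Tendsto (fun n => (((xs' n : H₁)), ys n)) Filter.atTop
            (nhds (x, y)) := hx.prodMk_nhds hy
        have hmemg : ∀ n, (((xs' n : H₁)), ys n) ∈ (T.graph : Set (H₁ × H₂)) := by
          intro n
          rw [SetLike.mem_coe, LinearPMap.mem_graph_iff]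
          exact ⟨xs' n, rfl, hxs' n⟩
        exact hclosed.mem_of_tendsto htend (Filter.Eventually.of_forall hmemg)
      rw [LinearPMap.mem_graph_iff] at hgraph
      obtain ⟨x', hx'1, hx'2⟩ := hgraph
      exact ⟨x', hx'2⟩
    · -- norm attaining inverse
      set x₀ : T.domain := ((m : ℂ))⁻¹ • xs with hx₀
      have hTx₀ : ‖T x₀‖ = 1 := by
        rw [hx₀, T.map_smul]
        simp [norm_smul, abs_of_pos hm_pos, hxsm, inv_mul_cancel₀ hm_pos.ne']
      have hnx₀ : ‖(x₀ : H₁)‖ = m⁻¹ := by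
        rw [hx₀]
        simp [norm_smul, hxs1, abs_of_pos hm_pos]
      refine ⟨x₀, hTx₀, ?_⟩
      rw [hnx₀]
      have hub : ∀ r ∈ S, r ≤ m⁻¹ := by
        rintro r ⟨x, hx1, rfl⟩
        have := hlb x
        rw [hx1] at this
        rw [← mul_le_mul_iff_right₀ hm_pos, mul_inv_cancel₀ hm_pos.ne']
        linarith
      have hmem : m⁻¹ ∈ S := ⟨x₀, hTx₀, hnx₀.symm⟩
      exact le_antisymm (le_csSup ⟨m⁻¹, hub⟩ hmem) (Real.sSup_le hub (by positivity))
  · rintro ⟨-, x₀, hTx₀, hx₀⟩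
    have hTx₀ne : T x₀ ≠ 0 := by
      intro h; rw [h] at hTx₀; simp at hTx₀
    have hx₀ne : (x₀ : H₁) ≠ 0 := by
      intro h
      exact hTx₀ne (by
        have : x₀ = 0 := Subtype.ext h
        simp [this, T.map_zero])
    by_cases hbdd : BddAbove S
    · set M := sSup S with hM
      have hMpos : 0 < M := by
        rw [← hx₀]
        exact norm_pos_iff.mpr hx₀ne
      set xs : T.domain := ((M : ℂ))⁻¹ • x₀ with hxs
      have hxs1 : ‖(xs : H₁)‖ = 1 := by
        rw [hxs]
        simp [norm_smul, abs_of_pos hMpos, hx₀.symm ▸ (inv_mul_cancel₀ hMpos.ne' : M⁻¹ * M = 1), ← hx₀,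
          inv_mul_cancel₀ hMpos.ne']
      have hTxs : ‖T xs‖ = M⁻¹ := by
        rw [hxs, T.map_smul]
        simp [norm_smul, hTx₀, abs_of_pos hMpos]
      refine ⟨xs, hxs1, ?_⟩
      rw [hTxs]
      have hmemI : ‖T xs‖ ∈ {r : ℝ | ∃ x : T.domain, ‖(x : H₁)‖ = 1 ∧ r = ‖T x‖} :=
        ⟨xs, hxs1, rfl⟩
      refine le_antisymm ?_ ?_
      · -- M⁻¹ ≤ sInf : every unit x has ‖Tx‖ ≥ M⁻¹
        apply le_csInf ⟨‖T xs‖, hmemI⟩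
        rintro r ⟨x, hx1, rfl⟩
        have hx0 : (x : H₁) ≠ 0 := by intro h; rw [h] at hx1; simp at hx1
        have hTx : T x ≠ 0 := aux_ne_zero T hinj hx0
        have hTxpos : (0 : ℝ) < ‖T x‖ := norm_pos_iff.mpr hTx
        set u : T.domain := ((‖T x‖ : ℂ))⁻¹ • x with hu
        have hTu : ‖T u‖ = 1 := by
          rw [hu, T.map_smul]
          simp [norm_smul, inv_mul_cancel₀ hTxpos.ne']
        have hnu : ‖(u : H₁)‖ = ‖T x‖⁻¹ := by
          rw [hu]
          simp [norm_smul, hx1]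
        have hmem : ‖T x‖⁻¹ ∈ S := ⟨u, hTu, hnu.symm⟩
        have : ‖T x‖⁻¹ ≤ M := le_csSup hbdd hmem
        exact (inv_le_comm₀ hTxpos hMpos).mp this
      · exact csInf_le hbddBelow (hTxs ▸ hmemI)
    · exfalso
      have : sSup S = 0 := Real.sSup_of_not_bddAbove hbdd
      rw [this] at hx₀
      exact hx₀ne (norm_eq_zero.mp hx₀)
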